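/- Any continuous piecewise linear function p : ℝⁿ → ℝ with q pieces can be exactly represented by a ReLU network whose number of layers l, maximum width w, and number of hidden neurons h satisfy l ≤ 2⌈log₂ q⌉ + 1, w ≤ 𝟙[q > 1]·⌈3q/2⌉·q, and h ≤ (3·2^⌈log₂ q⌉ + 2⌈log₂ q⌉ − 3)·q + 3·2^⌈log₂ q⌉ − 2⌈log₂ q⌉ − 3. -/

import Mathlib

noncomputable section

/-- The ReLU activation function. -/
def relu (x : ℝ) : ℝ := max 0 x

/-- A ReLU network with `hidden` hidden layers (i.e. `hidden + 1` layers in total),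
layer dimensions `k 0, k 1, …, k (hidden + 1)`, weight matrices `W i` and biases `b i`. -/
structure ReLUNet where
  hidden : ℕ
  k : ℕ → ℕ
  W : (i : ℕ) → Matrix (Fin (k (i + 1))) (Fin (k i)) ℝ
  b : (i : ℕ) → Fin (k (i + 1)) → ℝ

namespace ReLUNet

/-- The output of the `(i+1)`-st affine layer: `h 1 (x) = W 1 x + b 1` and
`h (i+1) (x) = W (i+1) σ (h i (x)) + b (i+1)`. -/
def layerOut (N : ReLUNet) : (i : ℕ) → (Fin (N.k 0) → ℝ) → Fin (N.k (i + 1)) → ℝ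
  | 0, x => (N.W 0).mulVec x + N.b 0
  | i + 1, x => (N.W (i + 1)).mulVec (fun j => relu (N.layerOut i x j)) + N.b (i + 1)

/-- The input-output function of the network. -/
def eval (N : ReLUNet) : (Fin (N.k 0) → ℝ) → Fin (N.k (N.hidden + 1)) → ℝ :=
  N.layerOut N.hidden

/-- The number of layers of the network. -/
def depth (N : ReLUNet) : ℕ := N.hidden + 1

/-- The number of hidden neurons of the network. -/
def numHiddenNeurons (N : ReLUNet) : ℕ := ∑ i ∈ Finset.Icc 1 N.hidden, N.k i

/-- The maximum width (maximum number of neurons over all hidden layers; `0` if none). -/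
def maxWidth (N : ReLUNet) : ℕ := (Finset.Icc 1 N.hidden).sup N.k

/-- The network `N` exactly represents the function `f : ℝⁿ → ℝᵐ`. -/
def Computes (N : ReLUNet) {n m : ℕ} (f : (Fin n → ℝ) → Fin m → ℝ) : Prop :=
  ∃ (h0 : N.k 0 = n) (h1 : N.k (N.hidden + 1) = m),
    ∀ (x : Fin n → ℝ) (j : Fin (N.k (N.hidden + 1))),
      N.eval (fun i => x (Fin.cast h0 i)) j = f x (Fin.cast h1 j)

/-- The network `N` exactly represents the scalar-valued function `f : ℝⁿ → ℝ`. -/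
def ComputesScalar (N : ReLUNet) {n : ℕ} (f : (Fin n → ℝ) → ℝ) : Prop :=
  N.Computes fun x (_ : Fin 1) => f x

end ReLUNet

/-- `f : ℝⁿ → ℝ` is an affine function. -/
def IsAffineFn {n : ℕ} (f : (Fin n → ℝ) → ℝ) : Prop :=
  ∃ (a : Fin n → ℝ) (c : ℝ), ∀ x, f x = (∑ i, a i * x i) + c

/-- `p` agrees with some affine function on the set `X`. -/
def AffineOnSet {n : ℕ} (p : (Fin n → ℝ) → ℝ) (X : Set (Fin n → ℝ)) : Prop :=
  ∃ f, IsAffineFn f ∧ ∀ x ∈ X, p x = f x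

/-- `X` is a finite family of closed subsets of `ℝⁿ` covering `ℝⁿ` on each of which `p` is
affine (the CPWL definition). -/
def IsCPWLFamily {n I : ℕ} (p : (Fin n → ℝ) → ℝ) (X : Fin I → Set (Fin n → ℝ)) : Prop :=
  (∀ i, IsClosed (X i)) ∧ (⋃ i, X i) = Set.univ ∧ ∀ i, AffineOnSet p (X i)

/-- A family of pieces: closed convex subsets satisfying the CPWL definition. -/
def IsPieceFamily {n I : ℕ} (p : (Fin n → ℝ) → ℝ) (X : Fin I → Set (Fin n → ℝ)) : Prop :=
  IsCPWLFamily p X ∧ ∀ i, Convex ℝ (X i)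

/-- `p` is CPWL with (minimum) number of pieces `q`. -/
def HasPieces {n : ℕ} (p : (Fin n → ℝ) → ℝ) (q : ℕ) : Prop :=
  (∃ X : Fin q → Set (Fin n → ℝ), IsPieceFamily p X) ∧
  ∀ (q' : ℕ) (X : Fin q' → Set (Fin n → ℝ)), IsPieceFamily p X → q ≤ q'

/-- A family of closed subsets satisfying the CPWL definition with minimum cardinality. -/
def IsMinimalClosedFamily {n I : ℕ} (p : (Fin n → ℝ) → ℝ)
    (X : Fin I → Set (Fin n → ℝ)) : Prop :=
  IsCPWLFamily p X ∧
  ∀ (I' : ℕ) (Y : Fin I' → Set (Fin n → ℝ)), IsCPWLFamily p Y → I ≤ I'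

/-- `f` is a linear component of `p`: `f` is affine and agrees with `p` on the union of a
nonempty subfamily of a minimal family of closed subsets satisfying the CPWL definition. -/
def IsLinearComponent {n : ℕ} (p f : (Fin n → ℝ) → ℝ) : Prop :=
  IsAffineFn f ∧
  ∃ (I : ℕ) (X : Fin I → Set (Fin n → ℝ)), IsMinimalClosedFamily p X ∧
    ∃ M : Finset (Fin I), M.Nonempty ∧ ∀ i ∈ M, ∀ x ∈ X i, f x = p x

/-- `p` has exactly `k` distinct linear components. -/
def HasLinearComponents {n : ℕ} (p : (Fin n → ℝ) → ℝ) (k : ℕ) : Prop :=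
  {f | IsLinearComponent p f}.Finite ∧ {f | IsLinearComponent p f}.ncard = k

/-- `φ(n, k) = min (∑_{i=0}^n C((k² − k)/2, i), k!)`. -/
def phi (n k : ℕ) : ℕ :=
  min (∑ i ∈ Finset.range (n + 1), Nat.choose ((k ^ 2 - k) / 2) i) (Nat.factorial k)

/-- A family of closed connected subsets of `ℝⁿ` covering `ℝⁿ` on each of which `p` is affine. -/
def IsConnFamily {n I : ℕ} (p : (Fin n → ℝ) → ℝ) (X : Fin I → Set (Fin n → ℝ)) : Prop :=
  (∀ i, IsClosed (X i)) ∧ (∀ i, IsConnected (X i)) ∧ (⋃ i, X i) = Set.univ ∧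
    ∀ i, AffineOnSet p (X i)

/-- A family of closed connected subsets satisfying the CPWL definition whose cardinality is
minimal among all such families (Assumption 1). -/
def IsMinConnFamily {n I : ℕ} (p : (Fin n → ℝ) → ℝ) (X : Fin I → Set (Fin n → ℝ)) : Prop :=
  IsConnFamily p X ∧
  ∀ (I' : ℕ) (Y : Fin I' → Set (Fin n → ℝ)), IsConnFamily p Y → I ≤ I'

/-- The sequence `r` from the paper: `r 1 = 0`, `r k = 3k/2 + r (k/2)` for even `k`, and
`r k = 2 + 3(k−1)/2 + r ((k+1)/2)` for odd `k ≠ 1`. -/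
def rseq : ℕ → ℕ
  | 0 => 0
  | 1 => 0
  | k + 2 =>
    if (k + 2) % 2 = 0 then 3 * ((k + 2) / 2) + rseq ((k + 2) / 2)
    else 2 + 3 * ((k + 1) / 2) + rseq ((k + 3) / 2)
  decreasing_by all_goals omega

end


noncomputable section
namespace CPWLAux
open Filter Topology

lemma relu_nonneg_eq {a : ℝ} (h : 0 ≤ a) : relu a = a := max_eq_right h
lemma relu_nonpos_eq {a : ℝ} (h : a ≤ 0) : relu a = 0 := max_eq_left h

lemma relu_sub_relu_neg (a : ℝ) : relu a - relu (-a) = a := by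
  rcases le_total a 0 with h | h
  · rw [relu_nonpos_eq h, relu_nonneg_eq (by linarith)]; ring
  · rw [relu_nonneg_eq h, relu_nonpos_eq (by linarith)]; ring

/-- combination: `cmb 1 a b = max a b`, `cmb (-1) a b = min a b`. -/
def cmb (ε a b : ℝ) : ℝ := a + ε * relu (ε * (b - a))

lemma cmb_one (a b : ℝ) : cmb 1 a b = max a b := by
  unfold cmb
  rcases le_total a b with h | h
  · rw [max_eq_right h, relu_nonneg_eq (by linarith)]; ring
  · rw [max_eq_left h, relu_nonpos_eq (by linarith)]; ring

lemma cmb_neg_one (a b : ℝ) : cmb (-1) a b = min a b := by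
  unfold cmb
  rcases le_total a b with h | h
  · rw [min_eq_left h, relu_nonpos_eq (by linarith)]; ring
  · rw [min_eq_right h, relu_nonneg_eq (by linarith)]; ring

lemma cmb_self (ε a : ℝ) : cmb ε a a = a := by
  unfold cmb; simp [relu, max_eq_left]

lemma cmb_eq_relu_comb (ε a b : ℝ) :
    cmb ε a b = relu a - relu (-a) + ε * relu (ε * (b - a)) := by
  rw [relu_sub_relu_neg]; rfl

/-- fold over indices `lo, lo+1, …, lo+m` with binary operation `op`. -/
def ladder (op : ℝ → ℝ → ℝ) (f : ℕ → ℝ) (lo : ℕ) : ℕ → ℝ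
  | 0 => f lo
  | m + 1 => op (ladder op f lo m) (f (lo + (m + 1)))

lemma ladder_merge (op : ℝ → ℝ → ℝ) (hassoc : ∀ a b c, op (op a b) c = op a (op b c))
    (f : ℕ → ℝ) (lo a b : ℕ) :
    ladder op f lo (a + b + 1) = op (ladder op f lo a) (ladder op f (lo + a + 1) b) := by
  induction b with
  | zero => rfl
  | succ b ih =>
      have : a + (b+1) + 1 = (a + b + 1) + 1 := by ring
      rw [this, ladder, ih, hassoc, ladder]
      ring_nf

lemma ladder_congr (op : ℝ → ℝ → ℝ) (f g : ℕ → ℝ) (lo m : ℕ)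
    (h : ∀ u, lo ≤ u → u ≤ lo + m → f u = g u) :
    ladder op f lo m = ladder op g lo m := by
  induction m with
  | zero => exact h lo le_rfl (by omega)
  | succ m ih =>
      rw [ladder, ladder, ih (fun u h1 h2 => h u h1 (by omega)), h (lo + (m+1)) (by omega) le_rfl]

lemma ladder_min_le (f : ℕ → ℝ) (lo m r : ℕ) (hr : r ≤ m) :
    ladder min f lo m ≤ f (lo + r) := by
  induction m with
  | zero => rw [show r = 0 by omega]; exact le_rfl
  | succ m ih =>
      rcases Nat.lt_or_ge r (m+1) with h | h
      · exact le_trans (min_le_left _ _) (ih (by omega))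
      · rw [show r = m + 1 by omega]; exact min_le_right _ _

lemma le_ladder_min (f : ℕ → ℝ) (lo m : ℕ) (v : ℝ) (h : ∀ r, r ≤ m → v ≤ f (lo + r)) :
    v ≤ ladder min f lo m := by
  induction m with
  | zero => exact h 0 le_rfl
  | succ m ih => exact le_min (ih fun r hr => h r (by omega)) (h (m+1) le_rfl)

lemma le_ladder_max (f : ℕ → ℝ) (lo m r : ℕ) (hr : r ≤ m) :
    f (lo + r) ≤ ladder max f lo m := by
  induction m with
  | zero => rw [show r = 0 by omega]; exact le_rfl
  | succ m ih =>
      rcases Nat.lt_or_ge r (m+1) with h | h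
      · exact le_trans (ih (by omega)) (le_max_left _ _)
      · rw [show r = m + 1 by omega]; exact le_max_right _ _

lemma ladder_max_le (f : ℕ → ℝ) (lo m : ℕ) (v : ℝ) (h : ∀ r, r ≤ m → f (lo + r) ≤ v) :
    ladder max f lo m ≤ v := by
  induction m with
  | zero => exact h 0 le_rfl
  | succ m ih => exact max_le (ih fun r hr => h r (by omega)) (h (m+1) le_rfl)

/-- delta-sum collapse. -/
lemma sum_delta (M u : ℕ) (cc : ℝ) (g : ℕ → ℝ) :
    ∑ m : Fin M, (if (m : ℕ) = u then cc else 0) * g (m : ℕ)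
      = if u < M then cc * g u else 0 := by
  split
  · next h =>
    rw [Finset.sum_eq_single (⟨u, h⟩ : Fin M)]
    · simp
    · intro b _ hb
      have : (b : ℕ) ≠ u := fun he => hb (Fin.ext he)
      simp [this]
    · simp
  · next h =>
    apply Finset.sum_eq_zero
    intro b _
    have : (b : ℕ) ≠ u := by omega
    simp [this]


/-- `aseq q t = ⌈q / 2^t⌉`, defined recursively. -/
def aseq (q : ℕ) : ℕ → ℕ
  | 0 => q
  | t + 1 => (aseq q t + 1) / 2

/-- neuron cost of one reduction step from `m` values. -/
def sOf (m : ℕ) : ℕ := 3 * (m / 2) + 2 * (m % 2)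

lemma sOf_eq (m : ℕ) : sOf m = m + (m + 1) / 2 := by unfold sOf; omega

lemma sOf_mono {m m' : ℕ} (h : m ≤ m') : sOf m ≤ sOf m' := by
  rw [sOf_eq, sOf_eq]; omega

lemma aseq_pos {q : ℕ} (hq : 1 ≤ q) : ∀ t, 1 ≤ aseq q t := by
  intro t; induction t with
  | zero => exact hq
  | succ t ih => unfold aseq; omega

lemma aseq_le {q : ℕ} (hq : 1 ≤ q) : ∀ t, aseq q t ≤ q := by
  intro t; induction t with
  | zero => exact le_rfl
  | succ t ih => unfold aseq; omega

lemma aseq_char {q : ℕ} (hq : 1 ≤ q) : ∀ t j, j < aseq q t ↔ j * 2 ^ t < q := by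
  intro t; induction t with
  | zero => intro j; simp [aseq]
  | succ t ih =>
      intro j
      have h2 := ih (2 * j)
      have h3 := ih (2 * j + 1)
      have e : j * 2 ^ (t + 1) = 2 * j * 2 ^ t := by ring
      have e2 : (2 * j + 1) * 2 ^ t = 2 * j * 2 ^ t + 2 ^ t := by ring
      have hp : 1 ≤ 2 ^ t := Nat.one_le_two_pow
      unfold aseq
      constructor
      · intro h
        rw [e]
        have : 2 * j < aseq q t := by omega
        exact (ih (2*j)).1 this
      · intro h
        rw [e] at h
        have : 2 * j * 2^t < q := h
        have := (ih (2*j)).2 this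
        omega

lemma aseq_shift (q : ℕ) : ∀ t, aseq q (t + 1) = aseq ((q + 1) / 2) t := by
  intro t; induction t with
  | zero => rfl
  | succ t ih => show (aseq q (t+1) + 1) / 2 = _ ; rw [ih]; rfl

lemma aseq_clog : ∀ q : ℕ, 1 ≤ q → aseq q (Nat.clog 2 q) = 1 := by
  intro q
  induction q using Nat.strong_induction_on with
  | _ q ih =>
      intro hq
      rcases Nat.lt_or_ge q 2 with h | h
      · interval_cases q
        simp [Nat.clog]; rfl
      · rw [Nat.clog_of_two_le (by norm_num) h]
        have hs : aseq q (Nat.clog 2 ((q + 2 - 1)/2) + 1) = aseq ((q+1)/2) (Nat.clog 2 ((q+2-1)/2)) := by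
          have := aseq_shift q (Nat.clog 2 ((q + 2 - 1)/2))
          exact this
        rw [hs, show (q + 2 - 1) / 2 = (q + 1) / 2 by omega]
        exact ih ((q+1)/2) (by omega) (by omega)


lemma aseq_step_eq (q t : ℕ) : aseq q (t + 1) = (aseq q t + 1) / 2 := rfl

/-- total cost bound. -/
lemma rsum_le : ∀ (c q : ℕ), 1 ≤ q → q ≤ 2 ^ c →
    (∑ t ∈ Finset.range c, sOf (aseq q t)) ≤ 3 * 2 ^ c - 3 := by
  intro c
  induction c with
  | zero => intro q h1 h2; simp
  | succ c ih =>
      intro q h1 h2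
      rw [Finset.sum_range_succ']
      have e : ∀ t, aseq q (t + 1) = aseq ((q+1)/2) t := aseq_shift q
      have : (∑ t ∈ Finset.range c, sOf (aseq q (t+1)))
          = ∑ t ∈ Finset.range c, sOf (aseq ((q+1)/2) t) := by
        apply Finset.sum_congr rfl; intro t _; rw [e t]
      rw [this]
      have hq' : 1 ≤ (q+1)/2 := by omega
      have h2c : 1 ≤ 2 ^ c := Nat.one_le_two_pow
      have hle : (q+1)/2 ≤ 2 ^ c := by
        have : (2:ℕ) ^ (c+1) = 2 * 2 ^ c := by ring
        omega
      have hih := ih ((q+1)/2) hq' hle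
      have hsq : sOf (aseq q 0) = q + (q+1)/2 := by rw [sOf_eq]; rfl
      have hsqb : sOf (aseq q 0) ≤ 3 * 2 ^ c := by
        rw [hsq]
        have : (2:ℕ) ^ (c+1) = 2 * 2 ^ c := by ring
        omega
      have : (2:ℕ) ^ (c+1) = 2 * 2 ^ c := by ring
      omega


lemma pieces_continuous {n q : ℕ} (p : (Fin n → ℝ) → ℝ) (X : Fin q → Set (Fin n → ℝ))
    (hcl : ∀ i, IsClosed (X i)) (hcov : (⋃ i, X i) = Set.univ)
    (f : Fin q → (Fin n → ℝ) → ℝ) (hfc : ∀ i, Continuous (f i))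
    (hpf : ∀ i, ∀ x ∈ X i, p x = f i x) : Continuous p := by
  rw [continuous_iff_isClosed]
  intro s hs
  have hds : p ⁻¹' s = ⋃ i, (X i ∩ f i ⁻¹' s) := by
    ext x
    simp only [Set.mem_preimage, Set.mem_iUnion, Set.mem_inter_iff]
    constructor
    · intro hx
      have hx2 : x ∈ ⋃ i, X i := by rw [hcov]; trivial
      obtain ⟨i, hi⟩ := Set.mem_iUnion.1 hx2
      exact ⟨i, hi, by simpa [← hpf i x hi] using hx⟩
    · rintro ⟨i, hi, hfi⟩
      simpa [hpf i x hi] using hfi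
  rw [hds]
  exact isClosed_iUnion_of_finite fun i => (hcl i).inter (hs.preimage (hfc i))

lemma pieces_lipschitz {n q : ℕ} (p : (Fin n → ℝ) → ℝ) (X : Fin q → Set (Fin n → ℝ))
    (hcl : ∀ i, IsClosed (X i)) (hcov : (⋃ i, X i) = Set.univ)
    (a : Fin q → Fin n → ℝ) (c : Fin q → ℝ)
    (hpf : ∀ i, ∀ x ∈ X i, p x = (∑ k, a i k * x k) + c i)
    (hp : Continuous p)
    (L : ℝ) (hLa : ∀ i, (∑ k, |a i k|) ≤ L) :
    ∀ x y, |p x - p y| ≤ L * ‖x - y‖ := by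
  intro x y
  -- nonemptiness of the index type
  have hxuniv : x ∈ ⋃ i, X i := by rw [hcov]; trivial
  obtain ⟨i₀, hi₀⟩ := Set.mem_iUnion.1 hxuniv
  have hL0 : 0 ≤ L :=
    le_trans (Finset.sum_nonneg fun k _ => abs_nonneg _) (hLa i₀)
  set γ : ℝ → (Fin n → ℝ) := fun t => x + t • (y - x) with hγ
  have hγc : Continuous γ := by
    apply continuous_const.add
    exact continuous_id.smul continuous_const
  have hγapp : ∀ t k, γ t k = x k + t * (y k - x k) := by
    intro t k; simp [hγ]
  set g : ℝ → ℝ := fun t => p (γ t) with hg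
  have hgc : Continuous g := hp.comp hγc
  set K := L * ‖x - y‖ with hK
  have hK0 : 0 ≤ K := mul_nonneg hL0 (norm_nonneg _)
  set S : Set ℝ := {t | t ∈ Set.Icc (0:ℝ) 1 ∧ |g t - g 0| ≤ K * t} with hSdef
  have hS0 : (0:ℝ) ∈ S := by
    constructor
    · exact ⟨le_rfl, zero_le_one⟩
    · simp
  have hScl : IsClosed S := by
    have : S = Set.Icc (0:ℝ) 1 ∩ {t | |g t - g 0| ≤ K * t} := rfl
    rw [this]
    exact isClosed_Icc.inter
      (isClosed_le ((hgc.sub continuous_const).abs) (continuous_const.mul continuous_id))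
  have hSbdd : BddAbove S := ⟨1, fun t ht => ht.1.2⟩
  set T := sSup S with hT
  have hTS : T ∈ S := hScl.csSup_mem ⟨0, hS0⟩ hSbdd
  have hT1 : T ≤ 1 := hTS.1.2
  have hT0 : 0 ≤ T := hTS.1.1
  -- key: T = 1
  have hTeq : T = 1 := by
    by_contra hne
    have hTlt : T < 1 := lt_of_le_of_ne hT1 hne
    set U : Set (Fin n → ℝ) := ⋂ i ∈ {i : Fin q | γ T ∉ X i}, (X i)ᶜ with hU
    have hUopen : IsOpen U :=
      Set.Finite.isOpen_biInter (Set.toFinite _) (fun i _ => (hcl i).isOpen_compl)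
    have hTU : γ T ∈ U := by
      rw [hU]
      apply Set.mem_iInter₂.2
      intro i hi
      exact hi
    have hVopen : IsOpen (γ ⁻¹' U) := hUopen.preimage hγc
    obtain ⟨δ, hδ, hball⟩ := Metric.isOpen_iff.1 hVopen T hTU
    set s := min 1 (T + δ/2) with hs
    have hTs : T < s := lt_min hTlt (by linarith)
    have hs1 : s ≤ 1 := min_le_left _ _
    have hs0 : 0 ≤ s := le_trans hT0 hTs.le
    have hsball : s ∈ Metric.ball T δ := by
      rw [Metric.mem_ball, Real.dist_eq]
      have : s ≤ T + δ/2 := min_le_right _ _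
      rw [abs_of_nonneg (by linarith : (0:ℝ) ≤ s - T)]
      linarith
    have hsU : γ s ∈ U := hball hsball
    -- the piece containing γ s also contains γ T
    have hsuniv : γ s ∈ ⋃ i, X i := by rw [hcov]; trivial
    obtain ⟨j, hj⟩ := Set.mem_iUnion.1 hsuniv
    have hTj : γ T ∈ X j := by
      by_contra hTj
      have : γ s ∈ (X j)ᶜ := (Set.mem_iInter₂.1 hsU) j hTj
      exact this hj
    -- estimate |g s - g T|
    have hgs : g s = (∑ k, a j k * γ s k) + c j := hpf j _ hj
    have hgT : g T = (∑ k, a j k * γ T k) + c j := hpf j _ hTj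
    have hdiff : g s - g T = (s - T) * ∑ k, a j k * (y k - x k) := by
      rw [hgs, hgT]
      have hsub : (∑ k, a j k * γ s k) - (∑ k, a j k * γ T k)
          = ∑ k, (s - T) * (a j k * (y k - x k)) := by
        rw [← Finset.sum_sub_distrib]
        apply Finset.sum_congr rfl
        intro k _
        rw [hγapp, hγapp]; ring
      calc (∑ k, a j k * γ s k) + c j - ((∑ k, a j k * γ T k) + c j)
            = (∑ k, a j k * γ s k) - (∑ k, a j k * γ T k) := by ring
        _ = ∑ k, (s - T) * (a j k * (y k - x k)) := hsub
        _ = (s - T) * ∑ k, a j k * (y k - x k) := by rw [Finset.mul_sum]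
    have hbound : |g s - g T| ≤ (s - T) * K := by
      rw [hdiff, abs_mul, abs_of_nonneg (by linarith : (0:ℝ) ≤ s - T)]
      apply mul_le_mul_of_nonneg_left _ (by linarith : (0:ℝ) ≤ s - T)
      calc |∑ k, a j k * (y k - x k)| ≤ ∑ k, |a j k * (y k - x k)| :=
              Finset.abs_sum_le_sum_abs _ _
        _ ≤ ∑ k, |a j k| * ‖x - y‖ := by
              apply Finset.sum_le_sum
              intro k _
              rw [abs_mul]
              apply mul_le_mul_of_nonneg_left _ (abs_nonneg _)
              have h1 : |y k - x k| = ‖(y - x) k‖ := by simp [Real.norm_eq_abs]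
              rw [h1, norm_sub_rev x y]
              exact norm_le_pi_norm (y - x) k
        _ = (∑ k, |a j k|) * ‖x - y‖ := by rw [Finset.sum_mul]
        _ ≤ L * ‖x - y‖ := mul_le_mul_of_nonneg_right (hLa j) (norm_nonneg _)
    have hsS : s ∈ S := by
      constructor
      · exact ⟨hs0, hs1⟩
      · calc |g s - g 0| ≤ |g s - g T| + |g T - g 0| := abs_sub_le _ _ _
          _ ≤ (s - T) * K + K * T := add_le_add hbound hTS.2
          _ = K * s := by ring
    have : s ≤ T := le_csSup hSbdd hsS
    linarith
  -- conclude
  have h1S : (1:ℝ) ∈ S := hTeq ▸ hTS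
  have hγ1 : γ 1 = y := by
    funext k; rw [hγapp]; ring
  have hγ0 : γ 0 = x := by
    funext k; rw [hγapp]; ring
  have hfin := h1S.2
  simp only [hg] at hfin
  rw [hγ1, hγ0] at hfin
  rw [abs_sub_comm]
  linarith


lemma affine_comb {n : ℕ} (aa : Fin n → ℝ) (cc w1 w2 : ℝ) (x1 x2 : Fin n → ℝ) (h : w1 + w2 = 1) :
    (∑ k, aa k * (w1 * x1 k + w2 * x2 k)) + cc
      = w1 * ((∑ k, aa k * x1 k) + cc) + w2 * ((∑ k, aa k * x2 k) + cc) := by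
  have hs : (∑ k, aa k * (w1 * x1 k + w2 * x2 k))
      = w1 * (∑ k, aa k * x1 k) + w2 * (∑ k, aa k * x2 k) := by
    rw [Finset.mul_sum, Finset.mul_sum, ← Finset.sum_add_distrib]
    apply Finset.sum_congr rfl; intro k _; ring
  rw [hs]; linear_combination (-cc) * h

lemma pair_sep {n : ℕ} (p : (Fin n → ℝ) → ℝ) (L : ℝ)
    (hL : ∀ x y, |p x - p y| ≤ L * ‖x - y‖)
    (af : Fin n → ℝ) (cf : ℝ) (ag : Fin n → ℝ) (cg : ℝ)
    (X Y : Set (Fin n → ℝ)) (hXc : Convex ℝ X) (hYc : Convex ℝ Y)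
    (hXne : X.Nonempty) (hYne : Y.Nonempty)
    (hpf : ∀ x ∈ X, p x = (∑ k, af k * x k) + cf)
    (hpg : ∀ y ∈ Y, p y = (∑ k, ag k * y k) + cg) :
    ∃ (v : Fin n → ℝ) (β : ℝ),
      (∀ x ∈ X, (∑ k, af k * x k) + cf ≤ (∑ k, v k * x k) + β) ∧
      (∀ y ∈ Y, (∑ k, v k * y k) + β ≤ (∑ k, ag k * y k) + cg) := by
  set f : (Fin n → ℝ) → ℝ := fun x => (∑ k, af k * x k) + cf with hf
  set g : (Fin n → ℝ) → ℝ := fun y => (∑ k, ag k * y k) + cg with hg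
  set D : Set ((Fin n → ℝ) × ℝ) :=
    {z | ∃ lam mu x y, 0 ≤ lam ∧ 0 ≤ mu ∧ x ∈ X ∧ y ∈ Y ∧
      z = (lam • (x - y), lam * (f x - g y) - mu)} with hD
  -- convexity of D
  have hDconv : Convex ℝ D := by
    rintro z1 ⟨l1, m1, x1, y1, hl1, hm1, hx1, hy1, rfl⟩
           z2 ⟨l2, m2, x2, y2, hl2, hm2, hx2, hy2, rfl⟩ s t hs ht hst
    by_cases hl : s * l1 + t * l2 = 0
    · have hsl1 : s * l1 = 0 := by nlinarith
      have htl2 : t * l2 = 0 := by nlinarith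
      refine ⟨0, s * m1 + t * m2, x1, y1, le_rfl, by nlinarith, hx1, hy1, ?_⟩
      apply Prod.ext
      · show (s • (l1 • (x1 - y1), l1 * (f x1 - g y1) - m1)
            + t • (l2 • (x2 - y2), l2 * (f x2 - g y2) - m2)).1 = _
        simp only [Prod.smul_fst, Prod.fst_add, smul_smul]
        rw [hsl1, htl2]
        simp
      · show (s • (l1 • (x1 - y1), l1 * (f x1 - g y1) - m1)
            + t • (l2 • (x2 - y2), l2 * (f x2 - g y2) - m2)).2 = _
        simp only [Prod.smul_snd, Prod.snd_add, smul_eq_mul]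
        have e1 : s * (l1 * (f x1 - g y1)) = 0 := by rw [← mul_assoc, hsl1]; ring
        have e2 : t * (l2 * (f x2 - g y2)) = 0 := by rw [← mul_assoc, htl2]; ring
        ring_nf
        ring_nf at e1 e2
        nlinarith [e1, e2]
    · set l := s * l1 + t * l2 with hldef
      have hlpos : 0 < l := lt_of_le_of_ne (by nlinarith) (Ne.symm hl)
      set w1 := s * l1 / l with hw1
      set w2 := t * l2 / l with hw2
      have hw1n : 0 ≤ w1 := div_nonneg (by nlinarith) hlpos.le
      have hw2n : 0 ≤ w2 := div_nonneg (by nlinarith) hlpos.le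
      have hwsum : w1 + w2 = 1 := by
        rw [hw1, hw2, ← add_div, hldef]; exact div_self hl
      refine ⟨l, s * m1 + t * m2, w1 • x1 + w2 • x2, w1 • y1 + w2 • y2,
        hlpos.le, by nlinarith, hXc hx1 hx2 hw1n hw2n hwsum, hYc hy1 hy2 hw1n hw2n hwsum, ?_⟩
      have hfx : f (w1 • x1 + w2 • x2) = w1 * f x1 + w2 * f x2 := by
        rw [hf]
        simp only [Pi.add_apply, Pi.smul_apply, smul_eq_mul]
        exact affine_comb af cf w1 w2 x1 x2 hwsum
      have hgy : g (w1 • y1 + w2 • y2) = w1 * g y1 + w2 * g y2 := by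
        rw [hg]
        simp only [Pi.add_apply, Pi.smul_apply, smul_eq_mul]
        exact affine_comb ag cg w1 w2 y1 y2 hwsum
      have hlw1 : l * w1 = s * l1 := by rw [hw1]; field_simp
      have hlw2 : l * w2 = t * l2 := by rw [hw2]; field_simp
      apply Prod.ext
      · show (s • (l1 • (x1 - y1), l1 * (f x1 - g y1) - m1)
            + t • (l2 • (x2 - y2), l2 * (f x2 - g y2) - m2)).1 = _
        simp only [Prod.smul_fst, Prod.fst_add, smul_smul]
        funext k
        simp only [Pi.add_apply, Pi.smul_apply, Pi.sub_apply, smul_eq_mul]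
        have : l * (w1 * x1 k + w2 * x2 k - (w1 * y1 k + w2 * y2 k))
            = (l * w1) * (x1 k - y1 k) + (l * w2) * (x2 k - y2 k) := by ring
        rw [this, hlw1, hlw2]
      · show (s • (l1 • (x1 - y1), l1 * (f x1 - g y1) - m1)
            + t • (l2 • (x2 - y2), l2 * (f x2 - g y2) - m2)).2 = _
        simp only [Prod.smul_snd, Prod.snd_add, smul_eq_mul]
        rw [hfx, hgy]
        have : l * (w1 * f x1 + w2 * f x2 - (w1 * g y1 + w2 * g y2))
            = (l * w1) * (f x1 - g y1) + (l * w2) * (f x2 - g y2) := by ring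
        rw [show l * (w1 * f x1 + w2 * f x2 - (w1 * g y1 + w2 * g y2)) - (s * m1 + t * m2)
            = (l * w1) * (f x1 - g y1) + (l * w2) * (f x2 - g y2) - (s * m1 + t * m2) by
              rw [this]]
        rw [hlw1, hlw2]
        ring
  -- scaling invariance
  have hDscale : ∀ (t : ℝ), 0 ≤ t → ∀ z ∈ D, t • z ∈ D := by
    rintro t ht z ⟨lam, mu, x, y, hlam, hmu, hx, hy, rfl⟩
    refine ⟨t * lam, t * mu, x, y, by nlinarith, by nlinarith, hx, hy, ?_⟩
    apply Prod.ext
    · simp [smul_smul]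
    · simp only [Prod.smul_snd, smul_eq_mul]
      ring
  -- 0 ∈ D
  obtain ⟨x₀, hx₀⟩ := hXne
  obtain ⟨y₀, hy₀⟩ := hYne
  have h0D : (0 : (Fin n → ℝ) × ℝ) ∈ D := by
    refine ⟨0, 0, x₀, y₀, le_rfl, le_rfl, hx₀, hy₀, ?_⟩
    simp [Prod.ext_iff]
  -- (0, 1) ∉ closure D
  have hnotin : ((0 : Fin n → ℝ), (1 : ℝ)) ∉ closure D := by
    intro hmem
    obtain ⟨u, hu, hlim⟩ := mem_closure_iff_seq_limit.1 hmem
    have hlim1 : Tendsto (fun k => (u k).1) atTop (𝓝 (0 : Fin n → ℝ)) :=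
      (continuous_fst.tendsto _).comp hlim
    have hlim2 : Tendsto (fun k => (u k).2) atTop (𝓝 (1 : ℝ)) :=
      (continuous_snd.tendsto _).comp hlim
    have hnormlim : Tendsto (fun k => L * ‖(u k).1‖) atTop (𝓝 (L * ‖(0 : Fin n → ℝ)‖)) :=
      (continuous_const.mul (continuous_norm.comp continuous_fst)).tendsto _ |>.comp hlim
    have hb : ∀ k, (u k).2 ≤ L * ‖(u k).1‖ := by
      intro k
      obtain ⟨lam, mu, x, y, hlam, hmu, hx, hy, he⟩ := hu k
      rw [he]
      simp only
      have hfg : f x - g y = p x - p y := by rw [hpf x hx, hpg y hy]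
      have h1 : lam * (f x - g y) - mu ≤ lam * (p x - p y) := by
        rw [hfg]; linarith
      have h2 : lam * (p x - p y) ≤ lam * (L * ‖x - y‖) := by
        apply mul_le_mul_of_nonneg_left _ hlam
        calc p x - p y ≤ |p x - p y| := le_abs_self _
          _ ≤ L * ‖x - y‖ := hL x y
      have h3 : lam * (L * ‖x - y‖) = L * ‖lam • (x - y)‖ := by
        rw [norm_smul, Real.norm_eq_abs, abs_of_nonneg hlam]; ring
      linarith
    have hcon : (1 : ℝ) ≤ L * ‖(0 : Fin n → ℝ)‖ :=
      le_of_tendsto_of_tendsto' hlim2 hnormlim hb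
    simp at hcon
    linarith
  -- separation
  obtain ⟨ψ, uu, hψ, huu⟩ :=
    geometric_hahn_banach_closed_point (hDconv.closure) isClosed_closure hnotin
  have hu0 : (0 : ℝ) < uu := by
    have := hψ _ (subset_closure h0D)
    rwa [map_zero] at this
  have hβpos : (0 : ℝ) < ψ ((0 : Fin n → ℝ), (1 : ℝ)) := lt_trans hu0 huu
  set β := ψ ((0 : Fin n → ℝ), (1 : ℝ)) with hβ
  have hnonpos : ∀ z ∈ D, ψ z ≤ 0 := by
    intro z hz
    by_contra hpos
    push_neg at hpos
    have ht : (0 : ℝ) ≤ (uu + 1) / ψ z := by positivity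
    have hmem : ((uu + 1) / ψ z) • z ∈ D := hDscale _ ht z hz
    have h2 := hψ _ (subset_closure hmem)
    rw [map_smul, smul_eq_mul, div_mul_cancel₀ _ (ne_of_gt hpos)] at h2
    linarith
  -- decomposition of ψ
  set w : Fin n → ℝ := fun k => ψ ((Pi.single k 1 : Fin n → ℝ), (0 : ℝ)) with hw
  have hdecomp : ∀ (d : Fin n → ℝ) (s : ℝ),
      ψ (d, s) = (∑ k, d k * w k) + s * β := by
    intro d s
    have h1 : ((d, s) : (Fin n → ℝ) × ℝ) = (d, 0) + (0, s) := by
      simp [Prod.ext_iff]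
    rw [h1, map_add]
    have h2 : ((d, (0:ℝ)) : (Fin n → ℝ) × ℝ)
        = ∑ k, d k • (((Pi.single k 1 : Fin n → ℝ), (0 : ℝ)) : (Fin n → ℝ) × ℝ) := by
      apply Prod.ext
      · rw [Prod.fst_sum]
        simp only [Prod.smul_fst]
        rw [show (fun k => d k • (Pi.single k 1 : Fin n → ℝ)) = fun k => Pi.single k (d k) by
          funext k
          rw [← Pi.single_smul, smul_eq_mul, mul_one]]
        exact (Finset.univ_sum_single d).symm
      · rw [Prod.snd_sum]
        simp
    have h3 : ((0, s) : (Fin n → ℝ) × ℝ) = s • ((0 : Fin n → ℝ), (1:ℝ)) := by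
      simp [Prod.ext_iff]
    rw [h2, h3, map_sum, map_smul]
    simp only [map_smul, smul_eq_mul]
    rfl
  -- the main inequality
  have hmain : ∀ x ∈ X, ∀ y ∈ Y,
      f x + (∑ k, x k * (w k / β)) ≤ g y + (∑ k, y k * (w k / β)) := by
    intro x hx y hy
    have hz : ((x - y, f x - g y) : (Fin n → ℝ) × ℝ) ∈ D := by
      refine ⟨1, 0, x, y, zero_le_one, le_rfl, hx, hy, ?_⟩
      simp
    have h1 := hnonpos _ hz
    rw [hdecomp] at h1
    have h2 : (∑ k, (x - y) k * w k) = (∑ k, x k * w k) - (∑ k, y k * w k) := by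
      rw [← Finset.sum_sub_distrib]
      apply Finset.sum_congr rfl
      intro k _
      simp [Pi.sub_apply]; ring
    rw [h2] at h1
    have h3 : (∑ k, x k * (w k / β)) = (∑ k, x k * w k) / β := by
      rw [Finset.sum_div]; apply Finset.sum_congr rfl; intro k _; ring
    have h4 : (∑ k, y k * (w k / β)) = (∑ k, y k * w k) / β := by
      rw [Finset.sum_div]; apply Finset.sum_congr rfl; intro k _; ring
    rw [h3, h4, ← sub_nonpos]
    have hrw : f x + (∑ k, x k * w k) / β - (g y + (∑ k, y k * w k) / β)
        = (((∑ k, x k * w k) - (∑ k, y k * w k)) + (f x - g y) * β) / β := by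
      field_simp
      ring
    rw [hrw]
    exact div_nonpos_iff.2 (Or.inr ⟨h1, hβpos.le⟩)
  -- build the affine separator
  set vv : Fin n → ℝ := fun k => w k / β with hvv
  set Sv : Set ℝ := (fun x => f x + ∑ k, x k * vv k) '' X with hSv
  have hSvne : Sv.Nonempty := ⟨_, ⟨x₀, hx₀, rfl⟩⟩
  have hSvbdd : BddAbove Sv := by
    refine ⟨g y₀ + ∑ k, y₀ k * vv k, ?_⟩
    rintro _ ⟨x, hx, rfl⟩
    exact hmain x hx y₀ hy₀
  set β₀ := sSup Sv with hβ₀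
  refine ⟨fun k => -vv k, β₀, ?_, ?_⟩
  · intro x hx
    have h1 : f x + ∑ k, x k * vv k ≤ β₀ := le_csSup hSvbdd ⟨x, hx, rfl⟩
    have h2 : (∑ k, (fun k => -vv k) k * x k) = -(∑ k, x k * vv k) := by
      rw [← Finset.sum_neg_distrib]
      apply Finset.sum_congr rfl
      intro k _; ring
    rw [h2]
    have : f x = (∑ k, af k * x k) + cf := rfl
    linarith [this ▸ h1]
  · intro y hy
    have h1 : β₀ ≤ g y + ∑ k, y k * vv k := by
      apply csSup_le hSvne
      rintro _ ⟨x, hx, rfl⟩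
      exact hmain x hx y hy
    have h2 : (∑ k, (fun k => -vv k) k * y k) = -(∑ k, y k * vv k) := by
      rw [← Finset.sum_neg_distrib]
      apply Finset.sum_congr rfl
      intro k _; ring
    rw [h2]
    have : g y = (∑ k, ag k * y k) + cg := rfl
    linarith [this ▸ h1]


lemma exists_maxmin_rep {n q : ℕ} (p : (Fin n → ℝ) → ℝ) (hq1 : 1 ≤ q)
    (X : Fin q → Set (Fin n → ℝ)) (hfam : IsPieceFamily p X) :
    ∃ (A : ℕ → ℕ → Fin n → ℝ) (C : ℕ → ℕ → ℝ),
      ∀ x, p x = ladder max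
        (fun i => ladder min (fun j => (∑ k, A i j k * x k) + C i j) 0 (q-1)) 0 (q-1) := by
  obtain ⟨⟨hcl, hcov, haff⟩, hconv⟩ := hfam
  -- affine data on each piece
  have hdata : ∀ i : Fin q, ∃ (a : Fin n → ℝ) (c : ℝ), ∀ x ∈ X i, p x = (∑ k, a k * x k) + c := by
    intro i
    obtain ⟨f, ⟨a, c, haf2⟩, hpf⟩ := haff i
    exact ⟨a, c, fun x hx => by rw [hpf x hx, haf2 x]⟩
  choose a c hac using hdata
  -- continuity
  have hcont : Continuous p := by
    apply pieces_continuous p X hcl hcov (fun i x => (∑ k, a i k * x k) + c i)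
    · intro i
      apply Continuous.add _ continuous_const
      exact continuous_finset_sum _ fun k _ => (continuous_const.mul (continuous_apply k))
    · exact hac
  -- Lipschitz
  set L : ℝ := ∑ i : Fin q, ∑ k, |a i k| with hLdef
  have hLa : ∀ i : Fin q, (∑ k, |a i k|) ≤ L := by
    intro i
    apply Finset.single_le_sum (f := fun i => ∑ k, |a i k|)
    · intro j _
      exact Finset.sum_nonneg fun k _ => abs_nonneg _
    · exact Finset.mem_univ i
  have hlip : ∀ x y, |p x - p y| ≤ L * ‖x - y‖ :=
    pieces_lipschitz p X hcl hcov a c hac hcont L hLa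
  -- pairwise separators
  have hpair : ∀ i j : Fin q, ∃ (v : Fin n → ℝ) (β : ℝ),
      (∀ x ∈ X i, (∑ k, a i k * x k) + c i ≤ (∑ k, v k * x k) + β) ∧
      (∀ y ∈ X j, (∑ k, v k * y k) + β ≤ (∑ k, a j k * y k) + c j) := by
    intro i j
    rcases (X i).eq_empty_or_nonempty with hXi | hXi
    · exact ⟨a j, c j, fun x hx => by rw [hXi] at hx; exact absurd hx (Set.notMem_empty x),
        fun y _ => le_rfl⟩
    rcases (X j).eq_empty_or_nonempty with hXj | hXj
    · exact ⟨a i, c i, fun x _ => le_rfl,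
        fun y hy => by rw [hXj] at hy; exact absurd hy (Set.notMem_empty y)⟩
    exact pair_sep p L hlip (a i) (c i) (a j) (c j) (X i) (X j)
      (hconv i) (hconv j) hXi hXj (hac i) (hac j)
  choose V B hV hB using hpair
  -- totalize
  refine ⟨fun i j => if h : i < q ∧ j < q then V ⟨i, h.1⟩ ⟨j, h.2⟩ else 0,
          fun i j => if h : i < q ∧ j < q then B ⟨i, h.1⟩ ⟨j, h.2⟩ else 0, ?_⟩
  intro x
  have hxuniv : x ∈ ⋃ i, X i := by rw [hcov]; trivial
  obtain ⟨i₀, hi₀⟩ := Set.mem_iUnion.1 hxuniv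
  set G : ℕ → ℕ → ℝ := fun i j =>
    (∑ k, (if h : i < q ∧ j < q then V ⟨i, h.1⟩ ⟨j, h.2⟩ else 0) k * x k)
      + (if h : i < q ∧ j < q then B ⟨i, h.1⟩ ⟨j, h.2⟩ else 0) with hGdef
  have hGval : ∀ (i j : Fin q), G i j = (∑ k, V i j k * x k) + B i j := by
    intro i j
    have h : (i : ℕ) < q ∧ (j : ℕ) < q := ⟨i.isLt, j.isLt⟩
    simp only [hGdef, dif_pos h]
  -- validity: every inner min is ≤ p x
  have hvalid : ∀ i : Fin q, ladder min (G i) 0 (q-1) ≤ p x := by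
    intro i
    have h1 : ladder min (G i) 0 (q-1) ≤ G i i₀ := by
      have := ladder_min_le (G i) 0 (q-1) i₀ (by omega)
      simpa using this
    apply le_trans h1
    have h2 : G i i₀ = (∑ k, V i i₀ k * x k) + B i i₀ := hGval i i₀
    rw [h2]
    calc (∑ k, V i i₀ k * x k) + B i i₀ ≤ (∑ k, a i₀ k * x k) + c i₀ := hB i i₀ x hi₀
      _ = p x := (hac i₀ x hi₀).symm
  -- attainment at i₀
  have hatt : ladder min (G i₀) 0 (q-1) = p x := by
    apply le_antisymm (hvalid i₀)
    apply le_ladder_min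
    intro r hr
    have hrq : r < q := by omega
    simp only [zero_add]
    have h3 : G i₀ r = (∑ k, V i₀ ⟨r, hrq⟩ k * x k) + B i₀ ⟨r, hrq⟩ := hGval i₀ ⟨r, hrq⟩
    rw [h3, hac i₀ x hi₀]
    exact hV i₀ ⟨r, hrq⟩ x hi₀
  -- outer max
  apply le_antisymm
  · have h4 := le_ladder_max (fun i => ladder min (G i) 0 (q-1)) 0 (q-1) i₀ (by omega)
    simp only [zero_add] at h4
    rw [hatt] at h4
    exact h4
  · apply ladder_max_le
    intro r hr
    have hrq : r < q := by omega
    simp only [zero_add]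
    have h5 : ladder min (G r) 0 (q-1) ≤ p x := hvalid ⟨r, hrq⟩
    exact h5


/-- number of parallel trees in hidden layer `m` (for `1 ≤ m ≤ 2c`). -/
def layT (q c m : ℕ) : ℕ := if m ≤ c then q else 1
/-- per-tree input count of hidden layer `m`. -/
def layAp (q c m : ℕ) : ℕ := if m ≤ c then aseq q (m - 1) else aseq q (m - c - 1)
/-- sign: min phase `-1`, max phase `1`. -/
def layEps (c m : ℕ) : ℝ := if m ≤ c then -1 else 1
def layS (q c m : ℕ) : ℕ := sOf (layAp q c m)
/-- per-tree output count of hidden layer `m`. -/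
def layAn (q c m : ℕ) : ℕ := (layAp q c m + 1) / 2
/-- width function of the network. -/
def kOf (n q c m : ℕ) : ℕ :=
  if m = 0 then n else if m ≤ 2*c then layT q c m * layS q c m else 1

def rowI (q c m r : ℕ) : ℕ := r / layS q c m
def rowJ (q c m r : ℕ) : ℕ := (r % layS q c m) / 3
def rowR (q c m r : ℕ) : ℕ := (r % layS q c m) % 3
def colA (q c m r : ℕ) : ℕ := rowI q c m r * layAp q c m + 2 * rowJ q c m r
def colB (q c m r : ℕ) : ℕ := colA q c m r + 1
def cA (q c m r : ℕ) : ℝ :=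
  if rowR q c m r = 0 then 1 else if rowR q c m r = 1 then -1 else -(layEps c m)
def cB (q c m r : ℕ) : ℝ :=
  if rowR q c m r = 2 then layEps c m else 0

def basePat (q c m v : ℕ) : ℕ := (v / layAn q c m) * layS q c m + 3 * (v % layAn q c m)
def epsP (q c m v : ℕ) : ℝ :=
  if 2 * (v % layAn q c m) + 1 < layAp q c m then layEps c m else 0
def coefPat (q c m v u : ℕ) : ℝ :=
  (if u = basePat q c m v then 1 else 0) + (if u = basePat q c m v + 1 then -1 else 0)
    + (if u = basePat q c m v + 2 then epsP q c m v else 0)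

lemma enc_lt {T S i w : ℕ} (hi : i < T) (hw : w < S) : i * S + w < T * S := by
  calc i * S + w < i * S + S := by omega
    _ = (i + 1) * S := by ring
    _ ≤ T * S := Nat.mul_le_mul_right S hi
lemma enc_div {S i w : ℕ} (hw : w < S) : (i * S + w) / S = i := by
  have hS : 0 < S := by omega
  rw [mul_comm, Nat.mul_add_div hS, Nat.div_eq_of_lt hw, add_zero]
lemma enc_mod {S i w : ℕ} (hw : w < S) : (i * S + w) % S = w := by
  rw [mul_comm, Nat.mul_add_mod, Nat.mod_eq_of_lt hw]

lemma div_lt_of_lt_mul' {v T an : ℕ} (h : v < T * an) : v / an < T := by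
  have han : 0 < an := by
    rcases Nat.eq_zero_or_pos an with h0 | h0
    · subst h0; simp at h
    · exact h0
  exact Nat.div_lt_of_lt_mul (by rwa [mul_comm] at h)

/-- the key sum collapse: extraction of a new value from a hidden layer. -/
lemma coef_collapse (q c m K : ℕ) (v : ℕ) (z : ℕ → ℝ)
    (hK : K = layT q c m * layS q c m)
    (hap : 2 ≤ layAp q c m)
    (hv : v < layT q c m * layAn q c m) :
    ∑ u : Fin K, coefPat q c m v (u : ℕ) * relu (z (u : ℕ))
      = if 2 * (v % layAn q c m) + 1 < layAp q c m then
          relu (z (basePat q c m v)) - relu (z (basePat q c m v + 1))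
            + layEps c m * relu (z (basePat q c m v + 2))
        else relu (z (basePat q c m v)) - relu (z (basePat q c m v + 1)) := by
  set ap := layAp q c m with hapd
  set an := layAn q c m with hand
  set S := layS q c m with hSd
  set T := layT q c m with hTd
  have hSval : S = sOf ap := rfl
  have hanval : an = (ap + 1) / 2 := rfl
  have hi : v / an < T := div_lt_of_lt_mul' hv
  have hj : v % an < an := Nat.mod_lt _ (by unfold an; unfold layAn; omega)
  have hbase : basePat q c m v = (v / an) * S + 3 * (v % an) := rfl
  have hb0' : 3 * (v % an) + 1 < S := by
    rw [hSval]; unfold sOf; omega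
  have h1 : basePat q c m v < T * S := by
    rw [hbase]; exact enc_lt hi (by omega)
  have h2 : basePat q c m v + 1 < T * S := by
    rw [hbase, add_assoc]
    exact enc_lt hi (by omega)
  have hsplit : ∀ u : Fin K, coefPat q c m v (u : ℕ) * relu (z (u : ℕ))
      = (if (u : ℕ) = basePat q c m v then (1:ℝ) else 0) * relu (z (u : ℕ))
        + (if (u : ℕ) = basePat q c m v + 1 then (-1:ℝ) else 0) * relu (z (u : ℕ))
        + (if (u : ℕ) = basePat q c m v + 2 then epsP q c m v else 0) * relu (z (u : ℕ)) := by
    intro u; unfold coefPat; ring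
  rw [Finset.sum_congr rfl (fun u _ => hsplit u)]
  rw [Finset.sum_add_distrib, Finset.sum_add_distrib,
    sum_delta K (basePat q c m v) 1 (fun w => relu (z w)),
    sum_delta K (basePat q c m v + 1) (-1) (fun w => relu (z w)),
    sum_delta K (basePat q c m v + 2) (epsP q c m v) (fun w => relu (z w))]
  rw [hK]
  rw [if_pos h1, if_pos h2]
  by_cases hpair : 2 * (v % an) + 1 < ap
  · have h3 : basePat q c m v + 2 < T * S := by
      rw [hbase, add_assoc]
      refine enc_lt hi ?_
      rw [hSval]; unfold sOf; omega
    rw [if_pos h3, if_pos hpair]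
    unfold epsP
    rw [if_pos hpair]
    ring
  · have hez : epsP q c m v = 0 := by
      unfold epsP
      rw [if_neg hpair]
    rw [hez, if_neg hpair]
    split <;> ring

/-- the values computed after hidden layer `m`. -/
def Val (q c : ℕ) (lv : ℕ → ℕ → ℝ) : ℕ → ℕ → ℝ
  | 0, v => lv (v / q) (v % q)
  | m + 1, v =>
      if 2 * (v % layAn q c (m+1)) + 1 < layAp q c (m+1) then
        cmb (layEps c (m+1))
          (Val q c lv m ((v / layAn q c (m+1)) * layAp q c (m+1) + 2 * (v % layAn q c (m+1))))
          (Val q c lv m ((v / layAn q c (m+1)) * layAp q c (m+1) + 2 * (v % layAn q c (m+1)) + 1))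
      else Val q c lv m ((v / layAn q c (m+1)) * layAp q c (m+1) + 2 * (v % layAn q c (m+1)))

/-- pre-activation of hidden layer `m` at raw neuron index `u`. -/
def preF (q c : ℕ) (lv : ℕ → ℕ → ℝ) (m u : ℕ) : ℝ :=
  cA q c m u * Val q c lv (m - 1) (colA q c m u)
    + cB q c m u * Val q c lv (m - 1) (colB q c m u)

lemma row_decode (q c m i w : ℕ) (hw : w < layS q c m) :
    rowI q c m (i * layS q c m + w) = i ∧
    rowJ q c m (i * layS q c m + w) = w / 3 ∧
    rowR q c m (i * layS q c m + w) = w % 3 := by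
  refine ⟨?_, ?_, ?_⟩
  · unfold rowI; exact enc_div hw
  · unfold rowJ; rw [enc_mod hw]
  · unfold rowR; rw [enc_mod hw]

lemma preF_decode (q c m i w : ℕ) (lv : ℕ → ℕ → ℝ) (hw : w < layS q c m) :
    preF q c lv m (i * layS q c m + w)
      = (if w % 3 = 0 then (1:ℝ) else if w % 3 = 1 then -1 else -(layEps c m)) *
          Val q c lv (m-1) (i * layAp q c m + 2 * (w / 3))
        + (if w % 3 = 2 then layEps c m else 0) *
          Val q c lv (m-1) (i * layAp q c m + 2 * (w / 3) + 1) := by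
  obtain ⟨hri, hrj, hrr⟩ := row_decode q c m i w hw
  unfold preF cA cB colB colA
  rw [hri, hrj, hrr]

lemma sum_coef_val (q c m K : ℕ) (lv : ℕ → ℕ → ℝ) (hm : 1 ≤ m)
    (hK : K = layT q c m * layS q c m) (hap : 2 ≤ layAp q c m)
    (v : ℕ) (hv : v < layT q c m * layAn q c m) :
    ∑ u : Fin K, coefPat q c m v (u : ℕ) * relu (preF q c lv m (u : ℕ))
      = Val q c lv m v := by
  obtain ⟨m', rfl⟩ : ∃ m', m = m' + 1 := ⟨m - 1, by omega⟩
  rw [coef_collapse q c (m'+1) K v _ hK hap hv]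
  have hanap : layAn q c (m'+1) = (layAp q c (m'+1) + 1) / 2 := rfl
  have hSof : layS q c (m'+1)
      = 3 * (layAp q c (m'+1) / 2) + 2 * (layAp q c (m'+1) % 2) := rfl
  have hanpos : 0 < layAn q c (m'+1) := by omega
  have hjan : v % layAn q c (m'+1) < layAn q c (m'+1) := Nat.mod_lt _ hanpos
  have hbase : basePat q c (m'+1) v
      = (v / layAn q c (m'+1)) * layS q c (m'+1) + 3 * (v % layAn q c (m'+1)) := rfl
  have hb0 : 3 * (v % layAn q c (m'+1)) < layS q c (m'+1) := by omega
  have hb1 : 3 * (v % layAn q c (m'+1)) + 1 < layS q c (m'+1) := by omega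
  have e0a : (3 * (v % layAn q c (m'+1))) % 3 = 0 := by omega
  have e0b : (3 * (v % layAn q c (m'+1))) / 3 = v % layAn q c (m'+1) := by omega
  have e1a : (3 * (v % layAn q c (m'+1)) + 1) % 3 = 1 := by omega
  have e1b : (3 * (v % layAn q c (m'+1)) + 1) / 3 = v % layAn q c (m'+1) := by omega
  have hpre0 : preF q c lv (m'+1) (basePat q c (m'+1) v)
      = Val q c lv m' ((v / layAn q c (m'+1)) * layAp q c (m'+1)
          + 2 * (v % layAn q c (m'+1))) := by
    rw [hbase, preF_decode q c (m'+1) _ _ lv hb0, e0a, e0b]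
    norm_num
  have hpre1 : preF q c lv (m'+1) (basePat q c (m'+1) v + 1)
      = -(Val q c lv m' ((v / layAn q c (m'+1)) * layAp q c (m'+1)
          + 2 * (v % layAn q c (m'+1)))) := by
    rw [hbase, add_assoc, preF_decode q c (m'+1) _ _ lv hb1, e1a, e1b]
    norm_num
  by_cases hpair : 2 * (v % layAn q c (m'+1)) + 1 < layAp q c (m'+1)
  · have hb2 : 3 * (v % layAn q c (m'+1)) + 2 < layS q c (m'+1) := by omega
    have e2a : (3 * (v % layAn q c (m'+1)) + 2) % 3 = 2 := by omega
    have e2b : (3 * (v % layAn q c (m'+1)) + 2) / 3 = v % layAn q c (m'+1) := by omega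
    have hpre2 : preF q c lv (m'+1) (basePat q c (m'+1) v + 2)
        = layEps c (m'+1) * ((Val q c lv m' ((v / layAn q c (m'+1)) * layAp q c (m'+1)
            + 2 * (v % layAn q c (m'+1)) + 1))
          - Val q c lv m' ((v / layAn q c (m'+1)) * layAp q c (m'+1)
            + 2 * (v % layAn q c (m'+1)))) := by
      rw [hbase, add_assoc, preF_decode q c (m'+1) _ _ lv hb2, e2a, e2b]
      norm_num
      ring
    rw [if_pos hpair, hpre0, hpre1, hpre2]
    rw [show Val q c lv (m'+1) v
        = cmb (layEps c (m'+1))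
            (Val q c lv m' ((v / layAn q c (m'+1)) * layAp q c (m'+1)
              + 2 * (v % layAn q c (m'+1))))
            (Val q c lv m' ((v / layAn q c (m'+1)) * layAp q c (m'+1)
              + 2 * (v % layAn q c (m'+1)) + 1)) by
      rw [Val, if_pos hpair]]
    rw [cmb_eq_relu_comb]
  · rw [if_neg hpair, hpre0, hpre1]
    rw [show Val q c lv (m'+1) v
        = Val q c lv m' ((v / layAn q c (m'+1)) * layAp q c (m'+1)
            + 2 * (v % layAn q c (m'+1))) by
      rw [Val, if_neg hpair]]
    rw [relu_sub_relu_neg]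

lemma kOf_eq (n q c m : ℕ) (h1 : 1 ≤ m) (h2 : m ≤ 2*c) :
    kOf n q c m = layT q c m * layS q c m := by
  unfold kOf; rw [if_neg (by omega), if_pos h2]

lemma layAp_ge (q c m : ℕ) (hq : 2 ≤ q) (hc : c = Nat.clog 2 q)
    (h1 : 1 ≤ m) (h2 : m ≤ 2*c) : 2 ≤ layAp q c m := by
  have hc1 : 1 ≤ c := by
    rw [hc]; exact Nat.clog_pos (by norm_num) hq
  have hpow : 2^(c-1) < q := by
    rw [hc]
    exact Nat.pow_pred_clog_lt_self (by norm_num) hq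
  have key : ∀ t, t ≤ c - 1 → 2 ≤ aseq q t := by
    intro t ht
    have h := (aseq_char (by omega : 1 ≤ q) t 1)
    have hp : (2:ℕ)^t ≤ 2^(c-1) := Nat.pow_le_pow_right (by norm_num) ht
    have h2' : 1 * 2^t < q := by omega
    have := h.2 h2'
    omega
  unfold layAp
  split
  · exact key (m-1) (by omega)
  · exact key (m-c-1) (by omega)

lemma chain_eq (q c m : ℕ) (hq : 1 ≤ q) (hc : c = Nat.clog 2 q) (hc1 : 1 ≤ c)
    (h1 : 1 ≤ m) (h2 : m ≤ 2*c - 1) :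
    layT q c (m+1) * layAp q c (m+1) = layT q c m * layAn q c m := by
  have hclog : aseq q c = 1 := by rw [hc]; exact aseq_clog q hq
  unfold layT layAn layAp
  split_ifs with hA hB hB
  · congr 1
    rw [show m + 1 - 1 = (m-1)+1 by omega, aseq_step_eq]
  · omega
  · rw [show m + 1 - c - 1 = 0 by omega]
    show 1 * q = q * ((aseq q (m-1) + 1) / 2)
    rw [← aseq_step_eq, show (m-1)+1 = c by omega, hclog]
    ring
  · congr 1
    rw [show m + 1 - c - 1 = (m - c - 1)+1 by omega, aseq_step_eq]

lemma col_bound (q c mm r : ℕ) (hap : 2 ≤ layAp q c mm)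
    (hr : r < layT q c mm * layS q c mm) :
    colA q c mm r < layT q c mm * layAp q c mm
    ∧ (rowR q c mm r = 2 → colB q c mm r < layT q c mm * layAp q c mm) := by
  have hSof : layS q c mm = 3 * (layAp q c mm / 2) + 2 * (layAp q c mm % 2) := rfl
  have hSpos : 0 < layS q c mm := by omega
  have hi : r / layS q c mm < layT q c mm := div_lt_of_lt_mul' hr
  have hw : r % layS q c mm < layS q c mm := Nat.mod_lt _ hSpos
  have hcA : colA q c mm r = (r / layS q c mm) * layAp q c mm
      + 2 * ((r % layS q c mm) / 3) := rfl
  have hrR : rowR q c mm r = (r % layS q c mm) % 3 := rfl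
  constructor
  · rw [hcA]
    exact enc_lt hi (by omega)
  · intro h2
    rw [hrR] at h2
    have hcB : colB q c mm r = (r / layS q c mm) * layAp q c mm
        + (2 * ((r % layS q c mm) / 3) + 1) := by
      unfold colB; rw [hcA]; ring
    rw [hcB]
    exact enc_lt hi (by omega)


/-- the network implementing max-min of `q × q` affine functions (for `c ≥ 1`). -/
def theNet (n q c : ℕ) (Pa : ℕ → ℕ → ℕ → ℝ) (Pc : ℕ → ℕ → ℝ) : ReLUNet where
  hidden := 2*c
  k := kOf n q c
  W := fun m r cc =>
    if m = 0 then
      cA q c 1 (r : ℕ) * Pa (colA q c 1 (r : ℕ) / q) (colA q c 1 (r : ℕ) % q) (cc : ℕ)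
        + cB q c 1 (r : ℕ) * Pa (colB q c 1 (r : ℕ) / q) (colB q c 1 (r : ℕ) % q) (cc : ℕ)
    else if m < 2*c then
      cA q c (m+1) (r : ℕ) * coefPat q c m (colA q c (m+1) (r : ℕ)) (cc : ℕ)
        + cB q c (m+1) (r : ℕ) * coefPat q c m (colB q c (m+1) (r : ℕ)) (cc : ℕ)
    else coefPat q c (2*c) (r : ℕ) (cc : ℕ)
  b := fun m r =>
    if m = 0 then
      cA q c 1 (r : ℕ) * Pc (colA q c 1 (r : ℕ) / q) (colA q c 1 (r : ℕ) % q)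
        + cB q c 1 (r : ℕ) * Pc (colB q c 1 (r : ℕ) / q) (colB q c 1 (r : ℕ) % q)
    else 0

lemma net_invariant (n q c : ℕ) (hq : 2 ≤ q) (hc : c = Nat.clog 2 q) (hc1 : 1 ≤ c)
    (Pa : ℕ → ℕ → ℕ → ℝ) (Pc : ℕ → ℕ → ℝ) (x' : Fin (kOf n q c 0) → ℝ) :
    ∀ m, m ≤ 2*c - 1 → ∀ r : Fin ((theNet n q c Pa Pc).k (m+1)),
      (theNet n q c Pa Pc).layerOut m x' r
        = preF q c (fun i j => (∑ k : Fin (kOf n q c 0), Pa i j (k : ℕ) * x' k) + Pc i j)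
            (m+1) (r : ℕ) := by
  set lv : ℕ → ℕ → ℝ :=
    fun i j => (∑ k : Fin (kOf n q c 0), Pa i j (k : ℕ) * x' k) + Pc i j with hlv
  intro m
  induction m with
  | zero =>
      intro _ r
      show ((theNet n q c Pa Pc).W 0).mulVec x' r + (theNet n q c Pa Pc).b 0 r = _
      have hW : ∀ cc : Fin (kOf n q c 0), (theNet n q c Pa Pc).W 0 r cc
          = cA q c 1 (r : ℕ) * Pa (colA q c 1 (r : ℕ) / q) (colA q c 1 (r : ℕ) % q) (cc : ℕ)
            + cB q c 1 (r : ℕ) * Pa (colB q c 1 (r : ℕ) / q) (colB q c 1 (r : ℕ) % q) (cc : ℕ) := by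
        intro cc; simp [theNet]
      have hb : (theNet n q c Pa Pc).b 0 r
          = cA q c 1 (r : ℕ) * Pc (colA q c 1 (r : ℕ) / q) (colA q c 1 (r : ℕ) % q)
            + cB q c 1 (r : ℕ) * Pc (colB q c 1 (r : ℕ) / q) (colB q c 1 (r : ℕ) % q) := by
        simp [theNet]
      have hmv : ((theNet n q c Pa Pc).W 0).mulVec x' r
          = ∑ cc : Fin (kOf n q c 0), (theNet n q c Pa Pc).W 0 r cc * x' cc := rfl
      show ((theNet n q c Pa Pc).W 0).mulVec x' r + (theNet n q c Pa Pc).b 0 r = _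
      rw [hmv, hb, Finset.sum_congr rfl (fun cc _ => by rw [hW cc])]
      have hsplit : (∑ cc : Fin (kOf n q c 0),
          (cA q c 1 (r : ℕ) * Pa (colA q c 1 (r : ℕ) / q) (colA q c 1 (r : ℕ) % q) (cc : ℕ)
            + cB q c 1 (r : ℕ) * Pa (colB q c 1 (r : ℕ) / q) (colB q c 1 (r : ℕ) % q) (cc : ℕ))
              * x' cc)
          = cA q c 1 (r : ℕ) * (∑ cc : Fin (kOf n q c 0),
              Pa (colA q c 1 (r : ℕ) / q) (colA q c 1 (r : ℕ) % q) (cc : ℕ) * x' cc)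
            + cB q c 1 (r : ℕ) * (∑ cc : Fin (kOf n q c 0),
              Pa (colB q c 1 (r : ℕ) / q) (colB q c 1 (r : ℕ) % q) (cc : ℕ) * x' cc) := by
        rw [Finset.mul_sum, Finset.mul_sum, ← Finset.sum_add_distrib]
        apply Finset.sum_congr rfl; intro cc _; ring
      rw [hsplit]
      show _ = cA q c 1 (r : ℕ) * Val q c lv 0 (colA q c 1 (r : ℕ))
          + cB q c 1 (r : ℕ) * Val q c lv 0 (colB q c 1 (r : ℕ))
      show _ = cA q c 1 (r : ℕ) * lv (colA q c 1 (r : ℕ) / q) (colA q c 1 (r : ℕ) % q)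
          + cB q c 1 (r : ℕ) * lv (colB q c 1 (r : ℕ) / q) (colB q c 1 (r : ℕ) % q)
      rw [hlv]
      ring
  | succ m ih =>
      intro hm r
      have ihm := ih (by omega)
      show ((theNet n q c Pa Pc).W (m+1)).mulVec
          (fun u => relu ((theNet n q c Pa Pc).layerOut m x' u)) r
            + (theNet n q c Pa Pc).b (m+1) r = _
      have hb : (theNet n q c Pa Pc).b (m+1) r = 0 := by simp [theNet]
      have hW : ∀ u : Fin (kOf n q c (m+1)), (theNet n q c Pa Pc).W (m+1) r u
          = cA q c (m+2) (r : ℕ) * coefPat q c (m+1) (colA q c (m+2) (r : ℕ)) (u : ℕ)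
            + cB q c (m+2) (r : ℕ) * coefPat q c (m+1) (colB q c (m+2) (r : ℕ)) (u : ℕ) := by
        intro u
        simp only [theNet]
        rw [if_neg (Nat.succ_ne_zero m), if_pos (by omega : m + 1 < 2*c)]
      have hmv : ((theNet n q c Pa Pc).W (m+1)).mulVec
          (fun u => relu ((theNet n q c Pa Pc).layerOut m x' u)) r
          = ∑ u : Fin (kOf n q c (m+1)), (theNet n q c Pa Pc).W (m+1) r u
              * relu ((theNet n q c Pa Pc).layerOut m x' u) := rfl
      rw [hmv, hb, add_zero,
        Finset.sum_congr rfl (fun u _ => by rw [hW u, ihm u])]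
      have hsplit : (∑ u : Fin (kOf n q c (m+1)),
          (cA q c (m+2) (r : ℕ) * coefPat q c (m+1) (colA q c (m+2) (r : ℕ)) (u : ℕ)
            + cB q c (m+2) (r : ℕ) * coefPat q c (m+1) (colB q c (m+2) (r : ℕ)) (u : ℕ))
              * relu (preF q c lv (m+1) (u : ℕ)))
          = cA q c (m+2) (r : ℕ) * (∑ u : Fin (kOf n q c (m+1)),
              coefPat q c (m+1) (colA q c (m+2) (r : ℕ)) (u : ℕ)
                * relu (preF q c lv (m+1) (u : ℕ)))
            + cB q c (m+2) (r : ℕ) * (∑ u : Fin (kOf n q c (m+1)),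
              coefPat q c (m+1) (colB q c (m+2) (r : ℕ)) (u : ℕ)
                * relu (preF q c lv (m+1) (u : ℕ))) := by
        rw [Finset.mul_sum, Finset.mul_sum, ← Finset.sum_add_distrib]
        apply Finset.sum_congr rfl; intro u _; ring
      rw [hsplit]
      have hK : kOf n q c (m+1) = layT q c (m+1) * layS q c (m+1) :=
        kOf_eq n q c (m+1) (by omega) (by omega)
      have hap1 : 2 ≤ layAp q c (m+1) := layAp_ge q c (m+1) hq hc (by omega) (by omega)
      have hap2 : 2 ≤ layAp q c (m+2) := layAp_ge q c (m+2) hq hc (by omega) (by omega)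
      have hrK : (r : ℕ) < layT q c (m+2) * layS q c (m+2) := by
        have h : (r : ℕ) < kOf n q c (m+2) := r.isLt
        rwa [kOf_eq n q c (m+2) (by omega) (by omega)] at h
      have hchain : layT q c (m+2) * layAp q c (m+2) = layT q c (m+1) * layAn q c (m+1) :=
        chain_eq q c (m+1) (by omega) hc hc1 (by omega) (by omega)
      obtain ⟨hcolA, hcolB⟩ := col_bound q c (m+2) (r : ℕ) hap2 hrK
      have hvA : colA q c (m+2) (r : ℕ) < layT q c (m+1) * layAn q c (m+1) := by
        rw [← hchain]; exact hcolA
      rw [sum_coef_val q c (m+1) _ lv (by omega) hK hap1 _ hvA]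
      by_cases hcB : cB q c (m+2) (r : ℕ) = 0
      · rw [hcB]
        show _ = preF q c lv (m+2) (r : ℕ)
        unfold preF
        rw [show (m+2) - 1 = m + 1 by omega, hcB]
        ring_nf
      · have hrR : rowR q c (m+2) (r : ℕ) = 2 := by
          by_contra hne
          apply hcB
          unfold cB
          rw [if_neg hne]
        have hvB : colB q c (m+2) (r : ℕ) < layT q c (m+1) * layAn q c (m+1) := by
          rw [← hchain]; exact hcolB hrR
        rw [sum_coef_val q c (m+1) _ lv (by omega) hK hap1 _ hvB]
        show _ = preF q c lv (m+2) (r : ℕ)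
        unfold preF
        rw [show (m+2) - 1 = m + 1 by omega]

lemma net_eval (n q c : ℕ) (hq : 2 ≤ q) (hc : c = Nat.clog 2 q) (hc1 : 1 ≤ c)
    (Pa : ℕ → ℕ → ℕ → ℝ) (Pc : ℕ → ℕ → ℝ) (x' : Fin (kOf n q c 0) → ℝ) :
    ∀ r : Fin ((theNet n q c Pa Pc).k (2*c + 1)),
    (theNet n q c Pa Pc).layerOut (2*c) x' r
      = Val q c (fun i j => (∑ k : Fin (kOf n q c 0), Pa i j (k : ℕ) * x' k) + Pc i j)
          (2*c) 0 := by
  set lv : ℕ → ℕ → ℝ :=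
    fun i j => (∑ k : Fin (kOf n q c 0), Pa i j (k : ℕ) * x' k) + Pc i j with hlv
  have hclog : aseq q c = 1 := by rw [hc]; exact aseq_clog q (by omega)
  obtain ⟨m', hm'⟩ : ∃ m', 2*c = m' + 1 := ⟨2*c - 1, by omega⟩
  rw [hm']
  intro r
  have ihm := net_invariant n q c hq hc hc1 Pa Pc x' m' (by omega)
  show ((theNet n q c Pa Pc).W (m'+1)).mulVec
      (fun u => relu ((theNet n q c Pa Pc).layerOut m' x' u)) r
        + (theNet n q c Pa Pc).b (m'+1) r = _
  have hb : (theNet n q c Pa Pc).b (m'+1) r = 0 := by simp [theNet]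
  have hW : ∀ u : Fin (kOf n q c (m'+1)), (theNet n q c Pa Pc).W (m'+1) r u
      = coefPat q c (2*c) (r : ℕ) (u : ℕ) := by
    intro u
    simp only [theNet]
    rw [if_neg (Nat.succ_ne_zero m'), if_neg (by omega : ¬ (m' + 1 < 2*c))]
  have hmv : ((theNet n q c Pa Pc).W (m'+1)).mulVec
      (fun u => relu ((theNet n q c Pa Pc).layerOut m' x' u)) r
      = ∑ u : Fin (kOf n q c (m'+1)), (theNet n q c Pa Pc).W (m'+1) r u
          * relu ((theNet n q c Pa Pc).layerOut m' x' u) := rfl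
  rw [hmv, hb, add_zero,
    Finset.sum_congr rfl (fun u _ => by rw [hW u, ihm u])]
  -- sizes at the last layer
  have hK : kOf n q c (m'+1) = layT q c (m'+1) * layS q c (m'+1) :=
    kOf_eq n q c (m'+1) (by omega) (by omega)
  have hap1 : 2 ≤ layAp q c (m'+1) := layAp_ge q c (m'+1) hq hc (by omega) (by omega)
  have hT : layT q c (m'+1) = 1 := by
    unfold layT; rw [if_neg (by omega)]
  have hApfin : layAp q c (m'+1) = aseq q (c-1) := by
    unfold layAp; rw [if_neg (by omega)]
    congr 1; omega
  have hAnfin : layAn q c (m'+1) = 1 := by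
    unfold layAn
    rw [hApfin, ← aseq_step_eq, show (c-1)+1 = c by omega, hclog]
  have hr0 : (r : ℕ) = 0 := by
    have h1 : (r : ℕ) < kOf n q c (m'+1+1) := r.isLt
    have hk1 : kOf n q c (m'+1+1) = 1 := by
      unfold kOf; rw [if_neg (by omega), if_neg (by omega)]
    omega
  have := sum_coef_val q c (m'+1) (kOf n q c (m'+1)) lv (by omega) hK hap1
    ((r : ℕ)) (by rw [hT, hAnfin, hr0]; omega)
  rw [show coefPat q c (2*c) = coefPat q c (m'+1) by rw [hm']] at *
  rw [this, hr0, ← hm']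

lemma val_min_phase (q c : ℕ) (hq : 2 ≤ q) (hc : c = Nat.clog 2 q) (lv : ℕ → ℕ → ℝ) :
    ∀ m, m ≤ c → ∀ i j, j < aseq q m →
      Val q c lv m (i * aseq q m + j)
        = ladder min (lv i) (2^m * j) (min (2^m) (q - 2^m * j) - 1) := by
  intro m
  induction m with
  | zero =>
      intro _ i j hj
      have hjq : j < q := hj
      show lv ((i * q + j) / q) ((i * q + j) % q) = _
      rw [enc_div hjq, enc_mod hjq]
      have h1 : min (2^0) (q - 2^0 * j) - 1 = 0 := by
        simp only [pow_zero, one_mul]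
        omega
      have h2 : 2^0 * j = j := by simp
      rw [h1, h2]
      rfl
  | succ m ihm =>
      intro hm i j hj
      have hqq : 1 ≤ q := by omega
      have hstep : aseq q (m+1) = (aseq q m + 1)/2 := rfl
      have hap : layAp q c (m+1) = aseq q m := by
        unfold layAp; rw [if_pos hm]; congr 1
      have han : layAn q c (m+1) = aseq q (m+1) := by
        unfold layAn; rw [hap]
        exact (aseq_step_eq q m).symm
      have heps : layEps c (m+1) = -1 := by unfold layEps; rw [if_pos hm]
      have hdiv : (i * aseq q (m+1) + j) / layAn q c (m+1) = i := by
        rw [han]; exact enc_div hj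
      have hmod : (i * aseq q (m+1) + j) % layAn q c (m+1) = j := by
        rw [han]; exact enc_mod hj
      have hchar := aseq_char hqq
      have hP : 1 ≤ 2^m := Nat.one_le_two_pow
      have hjq : j * 2^(m+1) < q := (hchar (m+1) j).1 hj
      have hjq' : 2 * (2^m * j) < q := by
        rw [show 2 * (2^m * j) = j * 2^(m+1) by ring]; exact hjq
      rw [Val, hdiv, hmod, hap, heps]
      by_cases hpair : 2*j+1 < aseq q m
      · have h2j : 2*j < aseq q m := by omega
        have hA := ihm (by omega) i (2*j) h2j
        have hB := ihm (by omega) i (2*j+1) hpair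
        rw [show i * aseq q m + (2*j+1) = i * aseq q m + 2*j + 1 by ring] at hB
        have hC2 : (2*j+1) * 2^m < q := (hchar m (2*j+1)).1 hpair
        have hC2' : 2 * (2^m * j) + 2^m < q := by
          rw [show 2 * (2^m * j) + 2^m = (2*j+1) * 2^m by ring]; exact hC2
        rw [if_pos hpair, hA, hB, cmb_neg_one]
        rw [show 2^m * (2*j) = 2 * (2^m * j) by ring,
            show 2^m * (2*j+1) = 2 * (2^m * j) + 2^m by ring,
            show 2^(m+1) * j = 2 * (2^m * j) by ring]
        have e2 : min (2^m) (q - 2 * (2^m * j)) - 1 = 2^m - 1 := by omega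
        rw [e2]
        have hmerge := ladder_merge min min_assoc (lv i) (2 * (2^m * j)) (2^m - 1)
          (min (2^m) (q - (2 * (2^m * j) + 2^m)) - 1)
        rw [show 2 * (2^m * j) + (2^m - 1) + 1 = 2 * (2^m * j) + 2^m by omega] at hmerge
        rw [show (2^m - 1) + (min (2^m) (q - (2 * (2^m * j) + 2^m)) - 1) + 1
            = min (2^(m+1)) (q - 2 * (2^m * j)) - 1 by
          have : (2:ℕ)^(m+1) = 2 * 2^m := by ring
          omega] at hmerge
        rw [← hmerge]
      · have h2j : 2*j < aseq q m := by omega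
        have hA := ihm (by omega) i (2*j) h2j
        have hC2 : ¬ ((2*j+1) * 2^m < q) := fun hcon => hpair ((hchar m (2*j+1)).2 hcon)
        have hC2' : q ≤ 2 * (2^m * j) + 2^m := by
          rw [show 2 * (2^m * j) + 2^m = (2*j+1) * 2^m by ring]; omega
        rw [if_neg hpair, hA]
        rw [show 2^m * (2*j) = 2 * (2^m * j) by ring,
            show 2^(m+1) * j = 2 * (2^m * j) by ring]
        congr 1
        have : (2:ℕ)^(m+1) = 2 * 2^m := by ring
        omega

lemma val_max_phase (q c : ℕ) (hq : 2 ≤ q) (hc : c = Nat.clog 2 q) (hc1 : 1 ≤ c)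
    (lv : ℕ → ℕ → ℝ) :
    ∀ t, t ≤ c → ∀ j, j < aseq q t →
      Val q c lv (c + t) j
        = ladder max (fun i => Val q c lv c i) (2^t * j) (min (2^t) (q - 2^t * j) - 1) := by
  intro t
  induction t with
  | zero =>
      intro _ j hj
      have h1 : min (2^0) (q - 2^0 * j) - 1 = 0 := by
        simp only [pow_zero, one_mul]
        have := (aseq_char (by omega : 1 ≤ q) 0 j).1 hj
        omega
      have h2 : 2^0 * j = j := by simp
      rw [h1, h2]
      rfl
  | succ t ihm =>
      intro ht j hj
      have hqq : 1 ≤ q := by omega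
      have hstep : aseq q (t+1) = (aseq q t + 1)/2 := rfl
      have hap : layAp q c (c+t+1) = aseq q t := by
        unfold layAp; rw [if_neg (by omega)]
        congr 1; omega
      have han : layAn q c (c+t+1) = aseq q (t+1) := by
        unfold layAn; rw [hap]
        exact (aseq_step_eq q t).symm
      have heps : layEps c (c+t+1) = 1 := by unfold layEps; rw [if_neg (by omega)]
      have hanpos : 0 < aseq q (t+1) := by
        have := aseq_char hqq (t+1) 0
        omega
      have hdiv : j / layAn q c (c+t+1) = 0 := by
        rw [han]; exact Nat.div_eq_of_lt hj
      have hmod : j % layAn q c (c+t+1) = j := by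
        rw [han]; exact Nat.mod_eq_of_lt hj
      have hchar := aseq_char hqq
      have hP : 1 ≤ 2^t := Nat.one_le_two_pow
      have hjq : j * 2^(t+1) < q := (hchar (t+1) j).1 hj
      have hjq' : 2 * (2^t * j) < q := by
        rw [show 2 * (2^t * j) = j * 2^(t+1) by ring]; exact hjq
      have hco : c + (t+1) = (c + t) + 1 := by omega
      rw [hco, Val, hdiv, hmod, hap, heps]
      simp only [zero_mul, zero_add]
      by_cases hpair : 2*j+1 < aseq q t
      · have h2j : 2*j < aseq q t := by omega
        have hA := ihm (by omega) (2*j) h2j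
        have hB := ihm (by omega) (2*j+1) hpair
        have hC2 : (2*j+1) * 2^t < q := (hchar t (2*j+1)).1 hpair
        have hC2' : 2 * (2^t * j) + 2^t < q := by
          rw [show 2 * (2^t * j) + 2^t = (2*j+1) * 2^t by ring]; exact hC2
        rw [if_pos hpair, hA, hB, cmb_one]
        rw [show 2^t * (2*j) = 2 * (2^t * j) by ring,
            show 2^t * (2*j+1) = 2 * (2^t * j) + 2^t by ring,
            show 2^(t+1) * j = 2 * (2^t * j) by ring]
        have e2 : min (2^t) (q - 2 * (2^t * j)) - 1 = 2^t - 1 := by omega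
        rw [e2]
        have hmerge := ladder_merge max max_assoc (fun i => Val q c lv c i)
          (2 * (2^t * j)) (2^t - 1) (min (2^t) (q - (2 * (2^t * j) + 2^t)) - 1)
        rw [show 2 * (2^t * j) + (2^t - 1) + 1 = 2 * (2^t * j) + 2^t by omega] at hmerge
        rw [show (2^t - 1) + (min (2^t) (q - (2 * (2^t * j) + 2^t)) - 1) + 1
            = min (2^(t+1)) (q - 2 * (2^t * j)) - 1 by
          have : (2:ℕ)^(t+1) = 2 * 2^t := by ring
          omega] at hmerge
        rw [← hmerge]
      · have h2j : 2*j < aseq q t := by omega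
        have hA := ihm (by omega) (2*j) h2j
        have hC2 : ¬ ((2*j+1) * 2^t < q) := fun hcon => hpair ((hchar t (2*j+1)).2 hcon)
        have hC2' : q ≤ 2 * (2^t * j) + 2^t := by
          rw [show 2 * (2^t * j) + 2^t = (2*j+1) * 2^t by ring]; omega
        rw [if_neg hpair, hA]
        rw [show 2^t * (2*j) = 2 * (2^t * j) by ring,
            show 2^(t+1) * j = 2 * (2^t * j) by ring]
        congr 1
        have : (2:ℕ)^(t+1) = 2 * 2^t := by ring
        omega

lemma val_total (q c : ℕ) (hq : 2 ≤ q) (hc : c = Nat.clog 2 q) (hc1 : 1 ≤ c)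
    (lv : ℕ → ℕ → ℝ) :
    Val q c lv (2*c) 0
      = ladder max (fun i => ladder min (lv i) 0 (q-1)) 0 (q-1) := by
  have hqq : 1 ≤ q := by omega
  have hclog : aseq q c = 1 := by rw [hc]; exact aseq_clog q hqq
  have hqpow : q ≤ 2^c := by rw [hc]; exact Nat.le_pow_clog (by norm_num) q
  have h := val_max_phase q c hq hc hc1 lv c le_rfl 0 (by omega)
  rw [show c + c = 2*c by ring] at h
  rw [show (2:ℕ)^c * 0 = 0 by ring] at h
  rw [show min (2^c) (q - 0) - 1 = q - 1 by omega] at h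
  rw [h]
  apply ladder_congr
  intro u hu1 hu2
  have huq : u < q := by omega
  have h2 := val_min_phase q c hq hc lv c le_rfl u 0 (by omega)
  rw [hclog] at h2
  rw [show u * 1 + 0 = u by ring] at h2
  rw [show (2:ℕ)^c * 0 = 0 by ring] at h2
  rw [show min (2^c) (q - 0) - 1 = q - 1 by omega] at h2
  exact h2



/-- trivial one-layer network computing a single affine function. -/
def oneNet (n : ℕ) (a : Fin n → ℝ) (c0 : ℝ) : ReLUNet where
  hidden := 0
  k := fun m => if m = 0 then n else 1
  W := fun m r cc =>
    if hm : m = 0 then a (Fin.cast (by rw [hm]; simp) cc) else 0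
  b := fun m _ => if m = 0 then c0 else 0

lemma sum_Icc_one {M : Type*} [AddCommMonoid M] (f : ℕ → M) :
    ∀ N, (∑ m ∈ Finset.Icc 1 N, f m) = ∑ t ∈ Finset.range N, f (t+1) := by
  intro N
  induction N with
  | zero => simp
  | succ N ih =>
      rw [Finset.sum_Icc_succ_top (by omega), ih, Finset.sum_range_succ]

lemma sum_range_split {M : Type*} [AddCommMonoid M] (g : ℕ → M) (a : ℕ) :
    ∀ b, (∑ t ∈ Finset.range (a + b), g t)
      = (∑ t ∈ Finset.range a, g t) + ∑ t ∈ Finset.range b, g (a + t) := by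
  intro b
  induction b with
  | zero => simp
  | succ b ih =>
      rw [show a + (b+1) = (a+b)+1 by omega, Finset.sum_range_succ, ih,
        Finset.sum_range_succ, add_assoc]

end CPWLAux
end

/-- **Theorem 1.** Any CPWL function `p : ℝⁿ → ℝ` with `q` pieces can be represented by a ReLU
network whose number of layers `l`, maximum width `w`, and number of hidden neurons `h` satisfy
`l ≤ 2⌈log₂ q⌉ + 1`, `w ≤ 𝟙[q > 1]·⌈3q/2⌉·q`, and
`h ≤ (3·2^⌈log₂ q⌉ + 2⌈log₂ q⌉ − 3)·q + 3·2^⌈log₂ q⌉ − 2⌈log₂ q⌉ − 3`. -/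
theorem cpwl_relu_upper_bound_pieces (n q : ℕ) (p : (Fin n → ℝ) → ℝ) (hq : HasPieces p q) :
    ∃ N : ReLUNet, N.ComputesScalar p ∧
      N.depth ≤ 2 * Nat.clog 2 q + 1 ∧
      N.maxWidth ≤ (if 1 < q then 1 else 0) * ((3 * q + 1) / 2) * q ∧
      N.numHiddenNeurons ≤
        (3 * 2 ^ Nat.clog 2 q + 2 * Nat.clog 2 q - 3) * q
          + (3 * 2 ^ Nat.clog 2 q - 2 * Nat.clog 2 q - 3) := by
  classical
  obtain ⟨⟨X, hfam⟩, -⟩ := hq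
  have hq1 : 1 ≤ q := by
    by_contra h
    have hq0 : q = 0 := by omega
    subst hq0
    have hcov := hfam.1.2.1
    have hx : (fun _ => 0 : Fin n → ℝ) ∈ (Set.univ : Set (Fin n → ℝ)) := trivial
    rw [← hcov] at hx
    obtain ⟨i, -⟩ := Set.mem_iUnion.1 hx
    exact absurd i.isLt (by omega)
  obtain ⟨A, C, hrep⟩ := CPWLAux.exists_maxmin_rep p hq1 X hfam
  by_cases hq2 : 2 ≤ q
  · -- main case q ≥ 2
    set c := Nat.clog 2 q with hc
    have hc1 : 1 ≤ c := Nat.clog_pos (by norm_num) hq2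
    set Pa : ℕ → ℕ → ℕ → ℝ := fun i j k => if h : k < n then A i j ⟨k, h⟩ else 0 with hPa
    set N := CPWLAux.theNet n q c Pa C with hN
    have hk0' : CPWLAux.kOf n q c 0 = n := by
      unfold CPWLAux.kOf; simp
    have hk0 : N.k 0 = n := hk0'
    have hk1 : N.k (N.hidden + 1) = 1 := by
      show CPWLAux.kOf n q c (2*c + 1) = 1
      unfold CPWLAux.kOf
      rw [if_neg (by omega), if_neg (by omega)]
    refine ⟨N, ⟨hk0, hk1, ?_⟩, ?_, ?_, ?_⟩
    · intro x j
      have heval := CPWLAux.net_eval n q c hq2 hc hc1 Pa C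
        (fun i => x (Fin.cast hk0 i)) j
      have hG : (fun i j => (∑ k : Fin (CPWLAux.kOf n q c 0),
            Pa i j (k : ℕ) * x (Fin.cast hk0 k)) + C i j)
          = (fun i j => (∑ k : Fin n, A i j k * x k) + C i j) := by
        funext i j
        congr 1
        rw [← Fin.sum_congr' (fun kk : Fin n => A i j kk * x kk) hk0']
        apply Finset.sum_congr rfl
        intro kk _
        have hkk : (kk : ℕ) < n := by
          have h := kk.isLt
          omega
        rw [hPa]
        simp only []
        rw [dif_pos hkk]
        rfl
      have h2 : CPWLAux.Val q c (fun i j => (∑ k : Fin (CPWLAux.kOf n q c 0),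
            Pa i j (k : ℕ) * x (Fin.cast hk0 k)) + C i j) (2*c) 0 = p x := by
        rw [hG, CPWLAux.val_total q c hq2 hc hc1]
        exact (hrep x).symm
      exact heval.trans h2
    · -- depth
      show 2*c + 1 ≤ 2 * Nat.clog 2 q + 1
      rw [hc]
    · -- width
      have hq1' : 1 < q := hq2
      rw [if_pos hq1', one_mul]
      show (Finset.Icc 1 (2*c)).sup (CPWLAux.kOf n q c) ≤ (3 * q + 1) / 2 * q
      apply Finset.sup_le
      intro m hm
      rw [Finset.mem_Icc] at hm
      rw [CPWLAux.kOf_eq n q c m hm.1 hm.2]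
      have h1 : CPWLAux.layT q c m ≤ q := by
        unfold CPWLAux.layT; split <;> omega
      have h2 : CPWLAux.layS q c m ≤ CPWLAux.sOf q := by
        apply CPWLAux.sOf_mono
        unfold CPWLAux.layAp
        split <;> exact CPWLAux.aseq_le (by omega) _
      have h3 : CPWLAux.sOf q = (3 * q + 1) / 2 := by
        unfold CPWLAux.sOf; omega
      calc CPWLAux.layT q c m * CPWLAux.layS q c m
          ≤ q * CPWLAux.sOf q := Nat.mul_le_mul h1 h2
        _ = (3 * q + 1) / 2 * q := by rw [h3, mul_comm]
    · -- number of hidden neurons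
      show (∑ m ∈ Finset.Icc 1 (2*c), CPWLAux.kOf n q c m) ≤ _
      rw [CPWLAux.sum_Icc_one, show 2*c = c + c by ring, CPWLAux.sum_range_split]
      have e1 : ∀ t ∈ Finset.range c, CPWLAux.kOf n q c (t+1)
          = q * CPWLAux.sOf (CPWLAux.aseq q t) := by
        intro t ht
        rw [Finset.mem_range] at ht
        rw [CPWLAux.kOf_eq n q c (t+1) (by omega) (by omega)]
        unfold CPWLAux.layT CPWLAux.layS CPWLAux.layAp
        rw [if_pos (by omega : t+1 ≤ c), if_pos (by omega : t+1 ≤ c),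
          show t+1-1 = t by omega]
      have e2 : ∀ t ∈ Finset.range c, CPWLAux.kOf n q c (c + t + 1)
          = CPWLAux.sOf (CPWLAux.aseq q t) := by
        intro t ht
        rw [Finset.mem_range] at ht
        rw [CPWLAux.kOf_eq n q c (c+t+1) (by omega) (by omega)]
        unfold CPWLAux.layT CPWLAux.layS CPWLAux.layAp
        rw [if_neg (by omega : ¬ (c+t+1 ≤ c)), if_neg (by omega : ¬ (c+t+1 ≤ c)),
          show c+t+1-c-1 = t by omega, one_mul]
      rw [Finset.sum_congr rfl e1]
      rw [Finset.sum_congr rfl e2]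
      rw [← Finset.mul_sum]
      set R := ∑ t ∈ Finset.range c, CPWLAux.sOf (CPWLAux.aseq q t) with hr
      have hqpow : q ≤ 2^c := by rw [hc]; exact Nat.le_pow_clog (by norm_num) q
      have hRb : R ≤ 3 * 2^c - 3 := CPWLAux.rsum_le c q hq1 hqpow
      have hP : c < 2^c := Nat.lt_two_pow_self
      have hD3 : 2*c + 3 ≤ 3 * 2^c := by omega
      obtain ⟨D, hD⟩ : ∃ D, 3 * 2^c = 2*c + 3 + D := ⟨3*2^c - 2*c - 3, by omega⟩
      have h1 : 3 * 2^c + (c + c) - 3 = 4*c + D := by omega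
      have h2 : 3 * 2^c - (c + c) - 3 = D := by omega
      rw [h1, h2]
      have hR' : R ≤ 2*c + D := by omega
      calc q * R + R ≤ q * (2*c+D) + (2*c+D) :=
            add_le_add (Nat.mul_le_mul_left q hR') hR'
        _ = ((2*c+D)*q + D) + 2*c*1 := by ring
        _ ≤ ((2*c+D)*q + D) + 2*c*q :=
            Nat.add_le_add_left (Nat.mul_le_mul_left (2*c) (by omega : 1 ≤ q)) _
        _ = (4*c+D)*q + D := by ring
  · -- q = 1
    have hq1' : q = 1 := by omega
    subst hq1'
    set N := CPWLAux.oneNet n (fun k => A 0 0 k) (C 0 0) with hN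
    have hk0' : (if (0:ℕ) = 0 then n else 1) = n := by simp
    have hk0 : N.k 0 = n := hk0'
    have hk1 : N.k (N.hidden + 1) = 1 := rfl
    refine ⟨N, ⟨hk0, hk1, ?_⟩, ?_, ?_, ?_⟩
    · intro x j
      show ((N.W 0).mulVec (fun i => x (Fin.cast hk0 i)) + N.b 0) j = p x
      have hb : N.b 0 j = C 0 0 := by
        show (if (0:ℕ) = 0 then C 0 0 else 0) = C 0 0
        simp
      have hW : ∀ cc : Fin (N.k 0), N.W 0 j cc
          = A 0 0 (Fin.cast hk0' cc) := fun cc => rfl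
      have hmv : ((N.W 0).mulVec (fun i => x (Fin.cast hk0 i)) + N.b 0) j
          = (∑ cc : Fin (N.k 0), N.W 0 j cc * x (Fin.cast hk0 cc)) + N.b 0 j := rfl
      rw [hmv, hb, Finset.sum_congr rfl (fun cc _ => by rw [hW cc])]
      have hsum : (∑ cc : Fin (N.k 0), A 0 0 (Fin.cast hk0' cc) * x (Fin.cast hk0 cc))
          = ∑ k : Fin n, A 0 0 k * x k := by
        rw [← Fin.sum_congr' (fun kk : Fin n => A 0 0 kk * x kk) hk0']
        rfl
      rw [hsum]
      have := hrep x
      simp only [Nat.sub_self, CPWLAux.ladder] at this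
      exact this.symm
    · show 0 + 1 ≤ 2 * Nat.clog 2 1 + 1
      have : Nat.clog 2 1 = 0 := Nat.clog_one_right 2
      omega
    · show (Finset.Icc 1 0).sup N.k ≤ _
      rw [Finset.Icc_eq_empty (by omega), Finset.sup_empty]
      exact Nat.zero_le _
    · show (∑ m ∈ Finset.Icc 1 0, N.k m) ≤ _
      rw [Finset.Icc_eq_empty (by omega), Finset.sum_empty]
      exact Nat.zero_le _
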